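/- Let k be a perfect field of characteristic p > 0 and M a k-vector space. Let Z/pZ act on the p-th tensor power M^{⊗p} by cyclic permutation with generator σ. Then the map sending m ∈ M to the class of m^{⊗p} in the coinvariants (M^{⊗p})_σ is additive. -/

import Mathlib

open scoped TensorProduct

/-- The cyclic permutation `σ` of the `p`-th tensor power `M^{⊗p}`, as a `k`-linear map. -/
noncomputable def cyclicPerm (k M : Type*) [CommRing k] [AddCommGroup M] [Module k M]
    (p : ℕ) :
    PiTensorProduct k (fun _ : Fin p => M) →ₗ[k] PiTensorProduct k (fun _ : Fin p => M) :=
  (PiTensorProduct.reindex k (fun _ : Fin p => M) (finRotate p)).toLinearMap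

/-- The map `ψ : M → (M^{⊗p})_σ` sending `m` to the class of `m ⊗ m ⊗ ⋯ ⊗ m` in the
coinvariants `(M^{⊗p})_σ = M^{⊗p} ⧸ range (1 - σ)`. -/
noncomputable def psiPow (k M : Type*) [CommRing k] [AddCommGroup M] [Module k M]
    (p : ℕ) (m : M) :
    PiTensorProduct k (fun _ : Fin p => M) ⧸
      LinearMap.range (LinearMap.id - cyclicPerm k M p) :=
  Submodule.Quotient.mk (PiTensorProduct.tprod k (fun _ : Fin p => m))

/- ## Auxiliary lemmas -/

/-- The elementary tensor attached to a subset `s` of `Fin p`: factor `m` on `s`,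
factor `m'` off `s`. -/
noncomputable def tps {k M : Type*} [CommRing k] [AddCommGroup M] [Module k M] {p : ℕ}
    (m m' : M) (s : Finset (Fin p)) : PiTensorProduct k (fun _ : Fin p => M) :=
  PiTensorProduct.tprod k (s.piecewise (fun _ => m) (fun _ => m'))

lemma keyFin {n : ℕ} [hp : Fact (n+1).Prime] (d : Fin (n+1)) (hd : d ≠ 0) (x : Fin (n+1)) :
    ∃ c : ℕ, c • d = x := by
  have : Fact (Nat.card (Fin (n+1))).Prime := by simpa using hp
  rcases (AddSubgroup.zmultiples d).eq_bot_or_eq_top_of_prime_card with h | h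
  · exact absurd (h ▸ AddSubgroup.mem_zmultiples d) (by simpa using hd)
  · have hx : x ∈ AddSubgroup.zmultiples d := h ▸ trivial
    rw [← mem_multiples_iff_mem_zmultiples] at hx
    exact hx

lemma himage {n : ℕ} [NeZero n] (s : Finset (Fin n)) (g g' : Fin n) :
    (s.image (fun x => x + g)).image (fun x => x + g') = s.image (fun x => x + (g + g')) := by
  rw [Finset.image_image]
  apply Finset.image_congr
  intro x _
  simp [Function.comp, add_assoc]

lemma hstab {n : ℕ} [Fact (n+1).Prime] (s : Finset (Fin (n+1))) (hne : s ≠ ∅)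
    (hnu : s ≠ Finset.univ) (d : Fin (n+1)) (hd : s.image (fun x => x + d) = s) : d = 0 := by
  by_contra hd0
  have hiter : ∀ c : ℕ, s.image (fun x => x + c • d) = s := by
    intro c
    induction c with
    | zero => simp
    | succ c ih => rw [succ_nsmul, ← himage, ih, hd]
  obtain ⟨i, hi⟩ := Finset.nonempty_iff_ne_empty.mpr hne
  obtain ⟨j, hj⟩ : ∃ j, j ∉ s := by
    by_contra h
    push_neg at h
    exact hnu (Finset.eq_univ_iff_forall.mpr h)
  obtain ⟨c, hc⟩ := keyFin d hd0 (j - i)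
  apply hj
  have hmem : j ∈ s.image (fun x => x + c • d) := by
    refine Finset.mem_image.mpr ⟨i, hi, ?_⟩
    rw [hc]
    exact add_sub_cancel i j
  rwa [hiter c] at hmem

lemma hshiftmem {n : ℕ} [NeZero n] {s x : Finset (Fin n)} (g : Fin n)
    (hx : x = s.image (fun i => i + g)) :
    (x = ∅ ↔ s = ∅) ∧ (x = Finset.univ ↔ s = Finset.univ) := by
  have hcard : x.card = s.card := by
    rw [hx]
    exact Finset.card_image_of_injective s (add_left_injective g)
  constructor
  · rw [← Finset.card_eq_zero, ← Finset.card_eq_zero, hcard]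
  · rw [← Finset.card_eq_iff_eq_univ, ← Finset.card_eq_iff_eq_univ, hcard]

/-- The sum of a translation-invariant function over the nonconstant subsets of `Fin (n+1)`
vanishes, provided `(n+1) • z = 0` in the target. -/
lemma sum_orbits_zero {n : ℕ} [Fact (n+1).Prime] {Q : Type*} [AddCommMonoid Q]
    (F : Finset (Fin (n+1)) → Q)
    (hF : ∀ s g, F (s.image (fun x => x + g)) = F s)
    (hp : ∀ z : Q, (n + 1) • z = 0) :
    ∑ s ∈ Finset.univ.filter (fun s => s ≠ ∅ ∧ s ≠ Finset.univ), F s = 0 := by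
  classical
  set S' := Finset.univ.filter (fun s : Finset (Fin (n+1)) => s ≠ ∅ ∧ s ≠ Finset.univ) with hS'
  set orb : Finset (Fin (n+1)) → Finset (Finset (Fin (n+1))) :=
    fun s => Finset.image (fun g : Fin (n+1) => s.image (fun x => x + g)) Finset.univ with horb
  have hmem_orb : ∀ s x, x ∈ orb s ↔ ∃ g, s.image (fun i => i + g) = x := by
    intro s x; simp [horb]
  have hself : ∀ s, s ∈ orb s := by
    intro s
    rw [hmem_orb]
    exact ⟨0, by simp⟩
  have horb_shift : ∀ s g, orb (s.image (fun x => x + g)) = orb s := by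
    intro s g
    ext x
    rw [hmem_orb, hmem_orb]
    constructor
    · rintro ⟨g', rfl⟩
      exact ⟨g + g', (himage s g g').symm⟩
    · rintro ⟨g', rfl⟩
      refine ⟨g' - g, ?_⟩
      rw [himage, add_sub_cancel]
  have hS'mem : ∀ s ∈ S', ∀ x ∈ orb s, x ∈ S' := by
    intro s hs x hx
    rw [hmem_orb] at hx
    obtain ⟨g, hg⟩ := hx
    rw [hS', Finset.mem_filter] at hs ⊢
    obtain ⟨-, h1, h2⟩ := hs
    obtain ⟨e1, e2⟩ := hshiftmem g hg.symm
    exact ⟨Finset.mem_univ _, fun h => h1 (e1.mp h), fun h => h2 (e2.mp h)⟩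
  rw [← Finset.sum_fiberwise_of_maps_to (g := orb) (t := S'.image orb)
    (fun x hx => Finset.mem_image_of_mem orb hx) F]
  apply Finset.sum_eq_zero
  intro o ho
  obtain ⟨s, hs, rfl⟩ := Finset.mem_image.mp ho
  have hsprop := Finset.mem_filter.mp hs
  have hfib : S'.filter (fun x => orb x = orb s) = orb s := by
    ext x
    simp only [Finset.mem_filter]
    constructor
    · rintro ⟨-, hoe⟩
      exact hoe ▸ hself x
    · intro hx
      refine ⟨hS'mem s hs x hx, ?_⟩
      rw [hmem_orb] at hx
      obtain ⟨g, rfl⟩ := hx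
      exact horb_shift s g
  rw [hfib]
  have hinj : ∀ g ∈ (Finset.univ : Finset (Fin (n+1))), ∀ g' ∈ Finset.univ,
      s.image (fun x => x + g) = s.image (fun x => x + g') → g = g' := by
    intro g _ g' _ h
    have h2 := congrArg (fun u : Finset (Fin (n+1)) => u.image (fun x => x + (-g))) h
    simp only [himage] at h2
    rw [add_neg_cancel, ← sub_eq_add_neg] at h2
    have him_id : s.image (fun x => x + (0 : Fin (n+1))) = s := by simp
    rw [him_id] at h2
    have h3 := hstab s hsprop.2.1 hsprop.2.2 _ h2.symm
    symm
    rw [← sub_eq_zero]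
    exact h3
  have hsum : ∑ x ∈ orb s, F x = ∑ g : Fin (n+1), F (s.image (fun x => x + g)) :=
    Finset.sum_image hinj
  rw [hsum, Finset.sum_congr rfl (fun g _ => hF s g), Finset.sum_const]
  simpa using hp (F s)

/-- Over a perfect field `k` of characteristic `p`, the map
`ψ : M → (M^{⊗p})_σ`, `m ↦ [m^{⊗p}]`, is additive. -/
theorem psiPow_additive {k M : Type*} [Field k] [PerfectField k] (p : ℕ) [Fact p.Prime]
    [CharP k p] [AddCommGroup M] [Module k M] (m m' : M) :
    psiPow k M p (m + m') = psiPow k M p m + psiPow k M p m' := by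
  classical
  obtain ⟨n, rfl⟩ : ∃ n, p = n + 1 :=
    ⟨p - 1, (Nat.succ_pred_eq_of_pos (Fact.out : p.Prime).pos).symm⟩
  set R : Submodule k (PiTensorProduct k (fun _ : Fin (n+1) => M)) :=
    LinearMap.range (LinearMap.id - cyclicPerm k M (n+1)) with hR
  set q : PiTensorProduct k (fun _ : Fin (n+1) => M) →ₗ[k] _ := R.mkQ with hq
  have hsig : ∀ x, q (cyclicPerm k M (n+1) x) = q x := by
    intro x
    rw [hq, Submodule.mkQ_apply, Submodule.mkQ_apply, Submodule.Quotient.eq]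
    refine ⟨-x, ?_⟩
    rw [LinearMap.sub_apply, LinearMap.id_apply, map_neg]
    abel
  have hstep : ∀ s : Finset (Fin (n+1)),
      q (tps m m' (s.image (fun x => x + 1))) = q (tps m m' s) := by
    intro s
    have key : tps m m' (s.image (fun x => x + 1)) = cyclicPerm k M (n+1) (tps m m' s) := by
      unfold tps cyclicPerm
      rw [LinearEquiv.coe_coe, PiTensorProduct.reindex_tprod]
      congr 1
      funext i
      have hsymm : (finRotate (n+1)).symm i = i - 1 := by
        rw [Equiv.symm_apply_eq, finRotate_succ_apply, sub_add_cancel]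
      have hmm : i ∈ s.image (fun x => x + (1 : Fin (n+1))) ↔ i - 1 ∈ s := by
        simp only [Finset.mem_image]
        constructor
        · rintro ⟨a, ha, rfl⟩
          simpa using ha
        · intro h
          exact ⟨i - 1, h, sub_add_cancel i 1⟩
      simp [Finset.piecewise, hmm, hsymm, sub_eq_add_neg]
    rw [key, hsig]
  have hshift : ∀ (s : Finset (Fin (n+1))) (g : Fin (n+1)),
      q (tps m m' (s.image (fun x => x + g))) = q (tps m m' s) := by
    open Fin.NatCast in
    have hnat : ∀ (c : ℕ) (s : Finset (Fin (n+1))),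
        q (tps m m' (s.image (fun x => x + (c : Fin (n+1))))) = q (tps m m' s) := by
      intro c
      induction c with
      | zero => intro s; norm_num
      | succ c ih =>
        intro s
        have hcast : ((c + 1 : ℕ) : Fin (n+1)) = (c : Fin (n+1)) + 1 := by
          push_cast; ring
        rw [hcast, ← himage, hstep, ih]
    intro s g
    have h := hnat g.val s
    rwa [Fin.cast_val_eq_self] at h
  have hexp : (PiTensorProduct.tprod k (fun _ : Fin (n+1) => m + m')) =
      ∑ s : Finset (Fin (n+1)), tps m m' s :=
    MultilinearMap.map_add_univ (PiTensorProduct.tprod k) (fun _ => m) (fun _ => m')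
  show q _ = q _ + q _
  rw [hexp, map_sum]
  set S' := Finset.univ.filter (fun s : Finset (Fin (n+1)) => s ≠ ∅ ∧ s ≠ Finset.univ) with hS'
  have hsplit : (Finset.univ : Finset (Finset (Fin (n+1)))) =
      insert Finset.univ (insert ∅ S') := by
    ext s
    by_cases h1 : s = ∅ <;> by_cases h2 : s = Finset.univ <;>
      simp [hS', h1, h2]
  have hune : (Finset.univ : Finset (Fin (n+1))) ≠ ∅ := Finset.univ_nonempty.ne_empty
  have hne1 : (Finset.univ : Finset (Fin (n+1))) ∉ insert ∅ S' := by
    simp [hS', hune]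
  have hne2 : (∅ : Finset (Fin (n+1))) ∉ S' := by simp [hS']
  have hzero : ∑ s ∈ S', q (tps m m' s) = 0 := by
    apply sum_orbits_zero (fun s => q (tps m m' s)) (fun s g => hshift s g)
    intro z
    rw [← Nat.cast_smul_eq_nsmul k, CharP.cast_eq_zero k (n+1), zero_smul]
  rw [hsplit, Finset.sum_insert hne1, Finset.sum_insert hne2, hzero, add_zero]
  have h1 : q (tps m m' Finset.univ) = psiPow k M (n+1) m := by
    unfold tps psiPow
    rw [Finset.piecewise_univ]
    rfl
  have h2 : q (tps m m' ∅) = psiPow k M (n+1) m' := by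
    unfold tps psiPow
    rw [Finset.piecewise_empty]
    rfl
  rw [h1, h2]
  rfl
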